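/- Let g : ℝ → ℝ be continuous, nonnegative, and nondecreasing, with b > 0, u₀ ∈ ℝ, and let η_b denote the solution of η''=g(η), η(0)=u₀, η'(0)=b. Then for each fixed t in the common domain, the map b ↦ η_b(t) is nondecreasing in b. -/

import Mathlib

open Set MeasureTheory intervalIntegral

private lemma ftc_cont {f : ℝ → ℝ} (hf : Continuous f) (a x : ℝ) :
    HasDerivAt (fun u => ∫ s in a..u, f s) (f x) x :=
  integral_hasDerivAt_right (hf.intervalIntegrable a x)
    (hf.stronglyMeasurableAtFilter volume (nhds x)) hf.continuousAt

private lemma const_of_deriv_zero_Ico {T : ℝ} {f : ℝ → ℝ}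
    (hf : ∀ s ∈ Set.Ico (0:ℝ) T, HasDerivAt f 0 s) :
    ∀ t ∈ Set.Ico (0:ℝ) T, f t = f 0 := by
  intro t ht
  exact constant_of_has_deriv_right_zero (f := f) (a := 0) (b := t)
    (fun s hs => (hf s ⟨hs.1, lt_of_le_of_lt hs.2 ht.2⟩).continuousAt.continuousWithinAt)
    (fun s hs => (hf s ⟨hs.1, lt_trans hs.2 ht.2⟩).hasDerivWithinAt)
    t ⟨ht.1, le_refl t⟩

private lemma mono_of_deriv_nonneg_Ico {T : ℝ} {f f' : ℝ → ℝ}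
    (hf : ∀ s ∈ Set.Ico (0:ℝ) T, HasDerivAt f (f' s) s)
    (h0 : ∀ s ∈ Set.Ico (0:ℝ) T, 0 ≤ f' s) :
    MonotoneOn f (Set.Ico (0:ℝ) T) := by
  apply monotoneOn_of_hasDerivWithinAt_nonneg (convex_Ico 0 T) (f' := f')
    (fun s hs => (hf s hs).continuousAt.continuousWithinAt)
  · intro x hx
    rw [interior_Ico] at hx
    exact (hf x ⟨hx.1.le, hx.2⟩).hasDerivWithinAt
  · intro x hx
    rw [interior_Ico] at hx
    exact h0 x ⟨hx.1.le, hx.2⟩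

/-- Key lemma: the implicit time formula for a single solution of `η'' = g (η)`,
`η 0 = u₀`, `η' 0 = b > 0` :  `t = ∫_{u₀}^{η t} ds / √(b² + 2∫_{u₀}^s g)`. -/
private lemma g_cone_key (g : ℝ → ℝ) (hg : Continuous g) (hg0 : ∀ s, 0 ≤ g s)
    (u₀ b T : ℝ) (hbpos : 0 < b) (η η' : ℝ → ℝ)
    (hη0 : η 0 = u₀) (hη'0 : η' 0 = b)
    (hd1 : ∀ t ∈ Set.Ico (0:ℝ) T, HasDerivAt η (η' t) t)
    (hd2 : ∀ t ∈ Set.Ico (0:ℝ) T, HasDerivAt η' (g (η t)) t) :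
    ∀ t ∈ Set.Ico (0:ℝ) T,
      u₀ ≤ η t ∧
      (∫ s in u₀..(η t),
        (Real.sqrt (b^2 + 2 * max (∫ r in u₀..s, g r) 0))⁻¹) = t := by
  -- the potential G
  set G : ℝ → ℝ := fun x => ∫ r in u₀..x, g r with hGdef
  have hGd : ∀ x, HasDerivAt G (g x) x := fun x => ftc_cont hg u₀ x
  have hGcont : Continuous G := by
    rw [continuous_iff_continuousAt]; exact fun x => (hGd x).continuousAt
  have hGnonneg : ∀ x, u₀ ≤ x → 0 ≤ G x := fun x hx =>
    intervalIntegral.integral_nonneg hx (fun s _ => hg0 s)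
  have hGu₀ : G u₀ = 0 := intervalIntegral.integral_same
  -- η' is bounded below by b on the domain
  have hη'mono : MonotoneOn η' (Set.Ico (0:ℝ) T) :=
    mono_of_deriv_nonneg_Ico hd2 (fun s _ => hg0 (η s))
  have hη'pos : ∀ t ∈ Set.Ico (0:ℝ) T, b ≤ η' t := by
    intro t ht
    have h0mem : (0:ℝ) ∈ Set.Ico (0:ℝ) T := ⟨le_refl 0, lt_of_le_of_lt ht.1 ht.2⟩
    calc b = η' 0 := hη'0.symm
      _ ≤ η' t := hη'mono h0mem ht ht.1
  -- η is monotone, so η t ≥ u₀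
  have hηmono : MonotoneOn η (Set.Ico (0:ℝ) T) :=
    mono_of_deriv_nonneg_Ico hd1 (fun s hs => le_trans hbpos.le (hη'pos s hs))
  have hηge : ∀ t ∈ Set.Ico (0:ℝ) T, u₀ ≤ η t := by
    intro t ht
    have h0mem : (0:ℝ) ∈ Set.Ico (0:ℝ) T := ⟨le_refl 0, lt_of_le_of_lt ht.1 ht.2⟩
    calc u₀ = η 0 := hη0.symm
      _ ≤ η t := hηmono h0mem ht ht.1
  -- energy conservation: (η')² - 2 G (η) is constant
  have hE : ∀ t ∈ Set.Ico (0:ℝ) T, η' t ^ 2 = b ^ 2 + 2 * G (η t) := by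
    have hEd : ∀ s ∈ Set.Ico (0:ℝ) T,
        HasDerivAt (fun u => η' u ^ 2 - 2 * G (η u)) 0 s := by
      intro s hs
      have h1 : HasDerivAt (fun u => η' u ^ 2) (2 * η' s ^ 1 * g (η s)) s :=
        (hd2 s hs).pow 2
      have h2 : HasDerivAt (fun u => G (η u)) (g (η s) * η' s) s :=
        (hGd (η s)).comp s (hd1 s hs)
      have := h1.sub (h2.const_mul 2)
      convert this using 1
      · rfl
      · rfl
      · rfl
      · ring
    intro t ht
    have := const_of_deriv_zero_Ico hEd t ht
    simp only [hη0, hη'0, hGu₀] at this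
    linarith
  -- hence η' t = √(b² + 2 max (G (η t)) 0)
  have hη'eq : ∀ t ∈ Set.Ico (0:ℝ) T,
      Real.sqrt (b ^ 2 + 2 * max (G (η t)) 0) = η' t := by
    intro t ht
    have hmax : max (G (η t)) 0 = G (η t) := max_eq_left (hGnonneg _ (hηge t ht))
    rw [hmax, ← hE t ht, Real.sqrt_sq (le_trans hbpos.le (hη'pos t ht))]
  -- the integrand ψ
  set ψ : ℝ → ℝ := fun x => (Real.sqrt (b ^ 2 + 2 * max (G x) 0))⁻¹ with hψdef
  have hden : ∀ x, 0 < b ^ 2 + 2 * max (G x) 0 := by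
    intro x
    have : (0:ℝ) ≤ max (G x) 0 := le_max_right _ _
    nlinarith
  have hsqrtpos : ∀ x, 0 < Real.sqrt (b ^ 2 + 2 * max (G x) 0) := fun x =>
    Real.sqrt_pos.2 (hden x)
  have hψpos : ∀ x, 0 < ψ x := fun x => inv_pos.2 (hsqrtpos x)
  have hψcont : Continuous ψ := by
    apply Continuous.inv₀
    · exact Real.continuous_sqrt.comp (by fun_prop)
    · exact fun x => (hsqrtpos x).ne'
  -- F t := ∫_{u₀}^{η t} ψ - t is constant, equal to 0
  intro t ht
  refine ⟨hηge t ht, ?_⟩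
  have hFd : ∀ s ∈ Set.Ico (0:ℝ) T,
      HasDerivAt (fun u => (∫ r in u₀..(η u), ψ r) - u) 0 s := by
    intro s hs
    have h1 : HasDerivAt (fun u => ∫ r in u₀..(η u), ψ r) (ψ (η s) * η' s) s :=
      (ftc_cont hψcont u₀ (η s)).comp s (hd1 s hs)
    have h2 := h1.sub (hasDerivAt_id s)
    have hval : ψ (η s) * η' s - 1 = 0 := by
      have h3 := hη'eq s hs
      have h4 : η' s ≠ 0 := ne_of_gt (lt_of_lt_of_le hbpos (hη'pos s hs))
      simp only [hψdef]
      rw [h3]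
      field_simp
      norm_num
    rw [hval] at h2
    exact h2
  have := const_of_deriv_zero_Ico hFd t ht
  simp only [hη0, intervalIntegral.integral_same, sub_zero, zero_sub] at this
  -- this : (∫ r in u₀..η t, ψ r) - t = 0 - 0  (roughly); finish
  simpa [hψdef, hGdef] using by linarith [this]

theorem g_cone_monotone_in_slope (g : ℝ → ℝ)
    (hg : Continuous g) (hg0 : ∀ s, 0 ≤ g s) (hgmono : Monotone g)
    (u₀ b₁ b₂ T : ℝ) (hb₁ : 0 < b₁) (hb : b₁ ≤ b₂) (hT : 0 < T)
    (η₁ η₁' η₂ η₂' : ℝ → ℝ)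
    (hη₁0 : η₁ 0 = u₀) (hη₁'0 : η₁' 0 = b₁)
    (hη₂0 : η₂ 0 = u₀) (hη₂'0 : η₂' 0 = b₂)
    (hd11 : ∀ t ∈ Set.Ico (0 : ℝ) T, HasDerivAt η₁ (η₁' t) t)
    (hd12 : ∀ t ∈ Set.Ico (0 : ℝ) T, HasDerivAt η₁' (g (η₁ t)) t)
    (hd21 : ∀ t ∈ Set.Ico (0 : ℝ) T, HasDerivAt η₂ (η₂' t) t)
    (hd22 : ∀ t ∈ Set.Ico (0 : ℝ) T, HasDerivAt η₂' (g (η₂ t)) t) :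
    ∀ t ∈ Set.Ico (0 : ℝ) T, η₁ t ≤ η₂ t := by
  intro t ht
  have hb₂ : 0 < b₂ := lt_of_lt_of_le hb₁ hb
  obtain ⟨hge1, heq1⟩ := g_cone_key g hg hg0 u₀ b₁ T hb₁ η₁ η₁' hη₁0 hη₁'0 hd11 hd12 t ht
  obtain ⟨hge2, heq2⟩ := g_cone_key g hg hg0 u₀ b₂ T hb₂ η₂ η₂' hη₂0 hη₂'0 hd21 hd22 t ht
  set G : ℝ → ℝ := fun x => ∫ r in u₀..x, g r with hGdef
  set ψ₁ : ℝ → ℝ := fun x => (Real.sqrt (b₁ ^ 2 + 2 * max (G x) 0))⁻¹ with hψ₁def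
  set ψ₂ : ℝ → ℝ := fun x => (Real.sqrt (b₂ ^ 2 + 2 * max (G x) 0))⁻¹ with hψ₂def
  have hGcont : Continuous G := by
    rw [continuous_iff_continuousAt]; exact fun x => (ftc_cont hg u₀ x).continuousAt
  have hden : ∀ (b : ℝ), 0 < b → ∀ x, 0 < b ^ 2 + 2 * max (G x) 0 := by
    intro b hbpos x
    have : (0:ℝ) ≤ max (G x) 0 := le_max_right _ _
    nlinarith
  have hψ₁pos : ∀ x, 0 < ψ₁ x := fun x =>
    inv_pos.2 (Real.sqrt_pos.2 (hden b₁ hb₁ x))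
  have hψcont : ∀ (b : ℝ), 0 < b →
      Continuous fun x => (Real.sqrt (b ^ 2 + 2 * max (G x) 0))⁻¹ := by
    intro b hbpos
    apply Continuous.inv₀
    · exact Real.continuous_sqrt.comp (by fun_prop)
    · exact fun x => (Real.sqrt_pos.2 (hden b hbpos x)).ne'
  have hψ₁cont : Continuous ψ₁ := hψcont b₁ hb₁
  have hψ₂cont : Continuous ψ₂ := hψcont b₂ hb₂
  have hψle : ∀ x, ψ₂ x ≤ ψ₁ x := by
    intro x
    apply inv_anti₀ (Real.sqrt_pos.2 (hden b₁ hb₁ x))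
    apply Real.sqrt_le_sqrt
    have : b₁ ^ 2 ≤ b₂ ^ 2 := by nlinarith
    linarith
  -- the two integral identities
  have heq1' : (∫ s in u₀..(η₁ t), ψ₁ s) = t := heq1
  have heq2' : (∫ s in u₀..(η₂ t), ψ₂ s) = t := heq2
  by_contra hcon
  push_neg at hcon
  -- then t = ∫_{u₀}^{η₂ t} ψ₂ ≤ ∫_{u₀}^{η₂ t} ψ₁ < ∫_{u₀}^{η₁ t} ψ₁ = t
  have h1 : (∫ s in u₀..(η₂ t), ψ₂ s) ≤ ∫ s in u₀..(η₂ t), ψ₁ s :=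
    intervalIntegral.integral_mono_on hge2
      (hψ₂cont.intervalIntegrable _ _) (hψ₁cont.intervalIntegrable _ _)
      (fun x _ => hψle x)
  have h2 : (∫ s in u₀..(η₂ t), ψ₁ s) < ∫ s in u₀..(η₁ t), ψ₁ s := by
    have hsplit : (∫ s in u₀..(η₂ t), ψ₁ s) + (∫ s in (η₂ t)..(η₁ t), ψ₁ s)
        = ∫ s in u₀..(η₁ t), ψ₁ s :=
      intervalIntegral.integral_add_adjacent_intervals
        (hψ₁cont.intervalIntegrable _ _) (hψ₁cont.intervalIntegrable _ _)
    have hpos : 0 < ∫ s in (η₂ t)..(η₁ t), ψ₁ s :=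
      intervalIntegral_pos_of_pos (hψ₁cont.intervalIntegrable _ _)
        hψ₁pos hcon
    linarith
  linarith [heq1', heq2', h1, h2]
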